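/- Internal split property: if α is a truth-conditional formula of L, then for any formulas φ, ψ of L, α → (φ⩾ψ) ⊨ (α→φ) ⩾ (α→ψ) in InqI (i.e., every team in every intuitionistic Kripke model supporting α→(φ⩾ψ) supports (α→φ)⩾(α→ψ)). -/
import Mathlib


/-- Formulas of the language L: atoms, ⊥, ∧, ∨, →, and inquisitive disjunction ⩾. -/
inductive Formula (P : Type) : Type
  | atom : P → Formula P
  | bot  : Formula P
  | and  : Formula P → Formula P → Formula P
  | or   : Formula P → Formula P → Formula P
  | impl : Formula P → Formula P → Formula P
  | iorr : Formula P → Formula P → Formula P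

namespace Formula

/-- Negation ¬φ := φ → ⊥. -/
def neg {P : Type} (φ : Formula P) : Formula P := Formula.impl φ Formula.bot

/-- Polar question ?φ := φ ⩾ ¬φ. -/
def question {P : Type} (φ : Formula P) : Formula P := Formula.iorr φ φ.neg

/-- A standard formula contains no occurrence of inquisitive disjunction ⩾. -/
def standard {P : Type} : Formula P → Prop
  | atom _ => True
  | bot => True
  | and φ ψ => φ.standard ∧ ψ.standard
  | or φ ψ => φ.standard ∧ ψ.standard
  | impl φ ψ => φ.standard ∧ ψ.standard
  | iorr _ _ => False

end Formula

/-- An intuitionistic Kripke model: a partially ordered set of worlds with a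
persistent valuation. -/
structure KripkeModel (P : Type) where
  W : Type
  R : W → W → Prop
  refl : ∀ w, R w w
  antisymm : ∀ w v, R w v → R v w → w = v
  trans : ∀ w v u, R w v → R v u → R w u
  V : W → P → Prop
  persistent : ∀ w v p, R w v → V w p → V v p

/-- R[t], the up-set generated by a team t. -/
def KripkeModel.upset {P : Type} (M : KripkeModel P) (t : Set M.W) : Set M.W :=
  {v | ∃ w ∈ t, M.R w v}

/-- The support relation M,t ⊨ φ between teams and formulas. -/
def support {P : Type} (M : KripkeModel P) : Formula P → Set M.W → Prop
  | .atom p, t => ∀ w ∈ t, M.V w p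
  | .bot, t => t = ∅
  | .and φ ψ, t => support M φ t ∧ support M ψ t
  | .or φ ψ, t => ∃ t₁ t₂, t = t₁ ∪ t₂ ∧ support M φ t₁ ∧ support M ψ t₂
  | .impl φ ψ, t => ∀ t', t' ⊆ M.upset t → support M φ t' → support M ψ t'
  | .iorr φ ψ, t => support M φ t ∨ support M ψ t

/-- Truth at a world: M,w ⊨ φ iff M,{w} ⊨ φ. -/
def truth {P : Type} (M : KripkeModel P) (w : M.W) (φ : Formula P) : Prop :=
  support M φ {w}

/-- A formula is truth-conditional if support at a team amounts to truth at each world. -/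
def truthConditional {P : Type} (φ : Formula P) : Prop :=
  ∀ (M : KripkeModel P) (t : Set M.W), support M φ t ↔ ∀ w ∈ t, truth M w φ

/-- The partial truth-value function: `tvalIs M w φ b` says T(w,φ) is defined with value b
(b = true for value 1, i.e. M,w ⊨ φ; b = false for value 0, i.e. M,w ⊨ ¬φ). -/
def tvalIs {P : Type} (M : KripkeModel P) (w : M.W) (φ : Formula P) : Bool → Prop
  | true => truth M w φ
  | false => truth M w φ.neg

/-- Support is downward closed (persistence for teams). -/
lemma support_mono {P : Type} (M : KripkeModel P) (φ : Formula P) :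
    ∀ t s : Set M.W, s ⊆ t → support M φ t → support M φ s := by
  induction φ with
  | atom p => intro t s hs h w hw; exact h w (hs hw)
  | bot => intro t s hs h; subst h; exact Set.subset_eq_empty hs rfl
  | and φ ψ ihφ ihψ =>
      intro t s hs h
      exact ⟨ihφ t s hs h.1, ihψ t s hs h.2⟩
  | or φ ψ ihφ ihψ =>
      intro t s hs h
      obtain ⟨t₁, t₂, ht, h₁, h₂⟩ := h
      refine ⟨s ∩ t₁, s ∩ t₂, ?_, ihφ t₁ _ Set.inter_subset_right h₁,
        ihψ t₂ _ Set.inter_subset_right h₂⟩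
      rw [← Set.inter_union_distrib_left, ← ht]
      exact (Set.inter_eq_left.mpr hs).symm
  | impl φ ψ ihφ ihψ =>
      intro t s hs h t' ht' hφ'
      refine h t' ?_ hφ'
      intro v hv
      obtain ⟨w, hw, hr⟩ := ht' hv
      exact ⟨w, hs hw, hr⟩
  | iorr φ ψ ihφ ihψ =>
      intro t s hs h
      exact h.imp (ihφ t s hs) (ihψ t s hs)

/-- internal split property: if α is truth-conditional, then
α → (φ ⩾ ψ) entails (α → φ) ⩾ (α → ψ). -/
theorem internal_split_property {P : Type} (α φ ψ : Formula P)
    (hα : truthConditional α) (M : KripkeModel P) (t : Set M.W)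
    (h : support M (Formula.impl α (Formula.iorr φ ψ)) t) :
    support M (Formula.iorr (Formula.impl α φ) (Formula.impl α ψ)) t := by
  -- the maximal subteam of R[t] supporting α
  set tα : Set M.W := {w ∈ M.upset t | truth M w α} with htα
  have htαsub : tα ⊆ M.upset t := fun w hw => hw.1
  have hαtα : support M α tα := (hα M tα).mpr (fun w hw => hw.2)
  have key := h tα htαsub hαtα
  rcases key with hφ | hψ
  · left
    intro t' ht' hαt'
    have ht'sub : t' ⊆ tα := fun w hw =>
      ⟨ht' hw, ((hα M t').mp hαt') w hw⟩
    exact support_mono M φ tα t' ht'sub hφ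
  · right
    intro t' ht' hαt'
    have ht'sub : t' ⊆ tα := fun w hw =>
      ⟨ht' hw, ((hα M t').mp hαt') w hw⟩
    exact support_mono M ψ tα t' ht'sub hψ
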